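/- arXiv:1910.07283 — 2 statements merged into one kernel-verified Lean document; each statement's English description precedes it below -/
import Mathlib

section
/- Let G = (V, E, w) be a finite weighted graph and G' = (V, E', w) a subgraph with E' ⊆ E. For every minimum spanning forest F' of G', there exists a minimum spanning forest F of G such that no edge of E' \ F' belongs to F (i.e., (E' \ F') ∩ F = ∅). -/
open SimpleGraph Finset

variable {V : Type*} {W : Type*} [AddCommMonoid W] [LinearOrder W] [IsOrderedAddMonoid W]

/-- The simple graph whose edges are a given finite set of (unordered) pairs. -/
def fromEdges (F : Finset (Sym2 V)) : SimpleGraph V := SimpleGraph.fromEdgeSet ↑F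

/-- Two edge sets induce the same connected components (reachability). -/
def SameComponents (E F : Finset (Sym2 V)) : Prop :=
  ∀ a b : V, (fromEdges E).Reachable a b ↔ (fromEdges F).Reachable a b

/-- `F` is a spanning forest of the graph with edge set `E`. -/
def IsSpanningForest (E F : Finset (Sym2 V)) : Prop :=
  F ⊆ E ∧ (fromEdges F).IsAcyclic ∧ SameComponents E F

/-- `F` is a minimum spanning forest of the graph with edge set `E` and weights `w`. -/
def IsMSF (E : Finset (Sym2 V)) (w : Sym2 V → W) (F : Finset (Sym2 V)) : Prop :=
  IsSpanningForest E F ∧ ∀ F', IsSpanningForest E F' → F.sum w ≤ F'.sum w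

/-- `T` is a minimum spanning tree of the (connected) graph with edge set `E`. -/
def IsMST (E : Finset (Sym2 V)) (w : Sym2 V → W) (T : Finset (Sym2 V)) : Prop :=
  IsMSF E w T ∧ (fromEdges T).Connected



lemma fromEdges_adj {F : Finset (Sym2 V)} {a b : V} :
    (fromEdges F).Adj a b ↔ s(a, b) ∈ F ∧ a ≠ b := by
  simp [fromEdges, fromEdgeSet_adj]

lemma fromEdges_mono {F G : Finset (Sym2 V)} (h : F ⊆ G) : fromEdges F ≤ fromEdges G :=
  fromEdgeSet_mono (by exact_mod_cast h)

lemma fromEdges_insert (g : Sym2 V) (S : Finset (Sym2 V)) [DecidableEq V] :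
    fromEdges (insert g S) = fromEdges S ⊔ SimpleGraph.fromEdgeSet {g} := by
  ext a b
  simp [fromEdges, fromEdgeSet_adj, sup_adj]
  tauto

-- key reachability decomposition for adding one edge
lemma reachable_sup_edge {G : SimpleGraph V} {a b x y : V}
    (h : (G ⊔ SimpleGraph.fromEdgeSet {s(a, b)}).Reachable x y) :
    G.Reachable x y ∨ (G.Reachable x a ∧ G.Reachable b y) ∨
      (G.Reachable x b ∧ G.Reachable a y) := by
  obtain ⟨p⟩ := h
  induction p with
  | nil => exact Or.inl (Reachable.refl _)
  | cons h q ih =>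
    rename_i u v z
    rcases h with h | h
    · rcases ih with h1 | ⟨h1, h2⟩ | ⟨h1, h2⟩
      · exact Or.inl ((Adj.reachable h).trans h1)
      · exact Or.inr (Or.inl ⟨(Adj.reachable h).trans h1, h2⟩)
      · exact Or.inr (Or.inr ⟨(Adj.reachable h).trans h1, h2⟩)
    · rw [fromEdgeSet_adj] at h
      obtain ⟨hm, hne⟩ := h
      simp only [Set.mem_singleton_iff, Sym2.eq_iff] at hm
      rcases hm with ⟨rfl, rfl⟩ | ⟨rfl, rfl⟩
      · rcases ih with h1 | ⟨h1, h2⟩ | ⟨h1, h2⟩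
        · exact Or.inr (Or.inl ⟨Reachable.refl _, h1⟩)
        · exact Or.inr (Or.inl ⟨Reachable.refl _, h2⟩)
        · exact Or.inl h2
      · rcases ih with h1 | ⟨h1, h2⟩ | ⟨h1, h2⟩
        · exact Or.inr (Or.inr ⟨Reachable.refl _, h1⟩)
        · exact Or.inl h2
        · exact Or.inr (Or.inr ⟨Reachable.refl _, h2⟩)

lemma reachable_sup_edge_iff {G : SimpleGraph V} {a b x y : V} (hab : a ≠ b) :
    (G ⊔ SimpleGraph.fromEdgeSet {s(a, b)}).Reachable x y ↔
    (G.Reachable x y ∨ (G.Reachable x a ∧ G.Reachable b y) ∨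
      (G.Reachable x b ∧ G.Reachable a y)) := by
  constructor
  · exact reachable_sup_edge
  · have hle : G ≤ G ⊔ SimpleGraph.fromEdgeSet {s(a, b)} := le_sup_left
    have hab' : (G ⊔ SimpleGraph.fromEdgeSet {s(a, b)}).Reachable a b := by
      refine Adj.reachable ?_
      right
      rw [fromEdgeSet_adj]
      exact ⟨rfl, hab⟩
    rintro (h | ⟨h1, h2⟩ | ⟨h1, h2⟩)
    · exact h.mono hle
    · exact ((h1.mono hle).trans hab').trans (h2.mono hle)
    · exact ((h1.mono hle).trans hab'.symm).trans (h2.mono hle)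

lemma fromEdges_sdiff_single [DecidableEq V] {S : Finset (Sym2 V)} {g : Sym2 V} :
    fromEdges S \ SimpleGraph.fromEdgeSet {g} = fromEdges (S.erase g) := by
  ext a b
  simp [fromEdges, fromEdgeSet_adj, sdiff_adj, Finset.mem_erase]

lemma fromEdges_insert_erase_self [DecidableEq V] {S : Finset (Sym2 V)} {g : Sym2 V}
    (hg : g ∈ S) : fromEdges S = fromEdges (insert g (S.erase g)) := by
  rw [Finset.insert_erase hg]

lemma isAcyclic_mono {G H : SimpleGraph V} (h : G ≤ H) (hH : H.IsAcyclic) : G.IsAcyclic := by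
  intro v p hp
  exact hH (p.mapLe h) (hp.mapLe h)

/-- In an acyclic graph given by `T`, removing an edge disconnects its endpoints. -/
lemma not_reachable_erase_of_acyclic [DecidableEq V] {T : Finset (Sym2 V)} {a b : V}
    (hT : (fromEdges T).IsAcyclic) (he : s(a, b) ∈ T) (hab : a ≠ b) :
    ¬ (fromEdges (T.erase s(a, b))).Reachable a b := by
  have hbridge := (isAcyclic_iff_forall_edge_isBridge.mp hT)
    (e := s(a, b)) (by rw [mem_edgeSet, fromEdges_adj]; exact ⟨he, hab⟩)
  rw [isBridge_iff] at hbridge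
  rw [← fromEdges_sdiff_single]
  exact hbridge

/-- The exchange lemma: in an acyclic graph, remove edge `s(a,b)` and add `s(c,d)`, where
`c` (resp. `d`) is reachable from `a` (resp. `b`) after the removal. -/
lemma swap_lemma [DecidableEq V] {T : Finset (Sym2 V)} {a b c d : V}
    (hT : (fromEdges T).IsAcyclic) (he : s(a, b) ∈ T) (hab : a ≠ b)
    (hac : (fromEdges (T.erase s(a, b))).Reachable a c)
    (hbd : (fromEdges (T.erase s(a, b))).Reachable b d) :
    (fromEdges (insert s(c, d) (T.erase s(a, b)))).IsAcyclic ∧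
    (∀ x y : V, (fromEdges T).Reachable x y ↔
      (fromEdges (insert s(c, d) (T.erase s(a, b)))).Reachable x y) ∧
    s(c, d) ∉ T.erase s(a, b) := by
  set H := T.erase s(a, b) with hH
  have hnab : ¬ (fromEdges H).Reachable a b := not_reachable_erase_of_acyclic hT he hab
  have hHacyc : (fromEdges H).IsAcyclic :=
    isAcyclic_mono (fromEdges_mono (Finset.erase_subset _ _)) hT
  have hcd : c ≠ d := by
    rintro rfl
    exact hnab (hac.trans hbd.symm)
  have hncd : ¬ (fromEdges H).Reachable c d := by
    intro h
    exact hnab ((hac.trans h).trans hbd.symm)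
  have hfnot : s(c, d) ∉ H := by
    intro h
    exact hncd (Adj.reachable (fromEdges_adj.mpr ⟨h, hcd⟩))
  refine ⟨?_, ?_, hfnot⟩
  · -- acyclicity
    intro v p hp
    by_cases hmem : s(c, d) ∈ p.edges
    · have := (adj_and_reachable_delete_edges_iff_exists_cycle.mpr ⟨v, p, hp, hmem⟩).2
      rw [SimpleGraph.deleteEdges, fromEdges_sdiff_single, Finset.erase_insert hfnot] at this
      exact hncd this
    · -- cycle avoiding the new edge lives in H
      have hsub : ∀ e ∈ p.edges, e ∈ (fromEdges H).edgeSet := by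
        intro e hep
        have hes := p.edges_subset_edgeSet hep
        induction e with
        | _ x y =>
          rw [mem_edgeSet, fromEdges_adj] at hes ⊢
          refine ⟨?_, hes.2⟩
          rcases Finset.mem_insert.mp hes.1 with h | h
          · exact absurd (by rwa [h] at hep) hmem
          · exact h
      exact hHacyc (p.transfer _ hsub) (hp.transfer hsub)
  · -- same components
    intro x y
    have e1 : fromEdges T = fromEdges H ⊔ SimpleGraph.fromEdgeSet {s(a, b)} := by
      rw [← fromEdges_insert, ← fromEdges_insert_erase_self he]
    rw [e1, fromEdges_insert, reachable_sup_edge_iff hab, reachable_sup_edge_iff hcd]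
    constructor
    · rintro (h | ⟨h1, h2⟩ | ⟨h1, h2⟩)
      · exact Or.inl h
      · exact Or.inr (Or.inl ⟨h1.trans hac, hbd.symm.trans h2⟩)
      · exact Or.inr (Or.inr ⟨h1.trans hbd, hac.symm.trans h2⟩)
    · rintro (h | ⟨h1, h2⟩ | ⟨h1, h2⟩)
      · exact Or.inl h
      · exact Or.inr (Or.inl ⟨h1.trans hac.symm, hbd.trans h2⟩)
      · exact Or.inr (Or.inr ⟨h1.trans hbd.symm, hac.trans h2⟩)

/-- A walk from inside to outside an `H`-component must cross it. -/
lemma walk_crosses_cut {K H : SimpleGraph V} {u v a : V} (p : K.Walk u v)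
    (hu : H.Reachable a u) (hv : ¬ H.Reachable a v) :
    ∃ x y, s(x, y) ∈ p.edges ∧ H.Reachable a x ∧ ¬ H.Reachable a y := by
  induction p with
  | nil => exact absurd hu hv
  | cons h q ih =>
    rename_i s t r
    by_cases ht : H.Reachable a t
    · obtain ⟨x, y, hxy, h1, h2⟩ := ih ht hv
      exact ⟨x, y, by simp [hxy], h1, h2⟩
    · exact ⟨s, t, by simp, hu, ht⟩

/-- Each edge on a path in an acyclic graph is essential for connecting its endpoints. -/
lemma not_reachable_erase_of_path [DecidableEq V] {T : Finset (Sym2 V)} {a b : V}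
    (hT : (fromEdges T).IsAcyclic) (p : (fromEdges T).Walk a b) (hp : p.IsPath)
    {f : Sym2 V} (hf : f ∈ p.edges) :
    ¬ (fromEdges (T.erase f)).Reachable a b := by
  rintro ⟨q⟩
  have hle : fromEdges (T.erase f) ≤ fromEdges T := fromEdges_mono (Finset.erase_subset _ _)
  have huniq := isAcyclic_iff_path_unique.mp hT ⟨p, hp⟩ (q.mapLe hle).toPath
  have hfq : f ∈ ((q.mapLe hle).toPath : (fromEdges T).Walk a b).edges := by
    rw [← huniq]; exact hf
  have h1 := Walk.edges_toPath_subset (q.mapLe hle) hfq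
  simp_rw [Walk.edges_map, List.mem_map, Hom.ofLE_apply, Sym2.map_id', id] at h1
  obtain ⟨e, he, rfl⟩ := h1
  have h2 := q.edges_subset_edgeSet he
  simp only [fromEdges, SimpleGraph.edgeSet_fromEdgeSet] at h2
  have : e ∈ T.erase e := by exact_mod_cast h2.1
  exact (Finset.notMem_erase _ _) this

/-- Every finite edge set has a spanning forest. -/
lemma exists_spanningForest [DecidableEq V] (E : Finset (Sym2 V)) :
    ∃ F, IsSpanningForest E F := by
  induction E using Finset.strongInduction with
  | _ E ih =>
    by_cases hE : (fromEdges E).IsAcyclic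
    · exact ⟨E, Finset.Subset.refl _, hE, fun a b => Iff.rfl⟩
    · rw [SimpleGraph.IsAcyclic] at hE
      push_neg at hE
      obtain ⟨v, p, hp⟩ := hE
      have hne : p.edges ≠ [] := by
        intro h
        apply hp.not_nil
        rw [Walk.nil_iff_length_eq, ← Walk.length_edges, h]
        rfl
      obtain ⟨e, he⟩ := List.exists_mem_of_ne_nil _ hne
      have heE := p.edges_subset_edgeSet he
      induction e with
      | _ x y =>
        have hxy : (fromEdges E).Adj x y := (mem_edgeSet _).mp heE
        have hreach : (fromEdges E \ SimpleGraph.fromEdgeSet {s(x, y)}).Reachable x y :=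
          (adj_and_reachable_delete_edges_iff_exists_cycle.mpr ⟨v, p, hp, he⟩).2
        rw [fromEdges_sdiff_single] at hreach
        have hmem : s(x, y) ∈ E := (fromEdges_adj.mp hxy).1
        have hxny : x ≠ y := hxy.ne
        obtain ⟨F, hF1, hF2, hF3⟩ := ih (E.erase s(x, y)) (Finset.erase_ssubset hmem)
        refine ⟨F, hF1.trans (Finset.erase_subset _ _), hF2, fun a b => ?_⟩
        rw [← hF3 a b]
        constructor
        · intro h
          rw [fromEdges_insert_erase_self hmem, fromEdges_insert,
            reachable_sup_edge_iff hxny] at h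
          rcases h with h | ⟨h1, h2⟩ | ⟨h1, h2⟩
          · exact h
          · exact (h1.trans hreach).trans h2
          · exact (h1.trans hreach.symm).trans h2
        · intro h
          exact h.mono (fromEdges_mono (Finset.erase_subset _ _))

/-- Existence of a minimum spanning forest. -/
lemma exists_msf [DecidableEq V] (E : Finset (Sym2 V)) (w : Sym2 V → ℝ) :
    ∃ F, IsSpanningForest E F ∧ ∀ F', IsSpanningForest E F' → F.sum w ≤ F'.sum w := by
  classical
  set S := E.powerset.filter (fun F => IsSpanningForest E F) with hS
  have hSne : S.Nonempty := by
    obtain ⟨F, hF⟩ := exists_spanningForest E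
    exact ⟨F, by simp [hS, Finset.mem_filter, Finset.mem_powerset, hF, hF.1]⟩
  obtain ⟨F, hFS, hmin⟩ := S.exists_min_image (fun F => F.sum w) hSne
  rw [hS, Finset.mem_filter] at hFS
  refine ⟨F, hFS.2, fun F' hF' => ?_⟩
  exact hmin F' (by simp [hS, Finset.mem_filter, Finset.mem_powerset, hF', hF'.1])

/-- Exchange in a minimum spanning forest gives the weight comparison. -/
lemma weight_le_of_swap [DecidableEq V] {E' F' : Finset (Sym2 V)} {w : Sym2 V → ℝ}
    (hF' : IsSpanningForest E' F')
    (hmin : ∀ F₂, IsSpanningForest E' F₂ → F'.sum w ≤ F₂.sum w)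
    {a b c d : V} (hcd : c ≠ d) (hf : s(c, d) ∈ F') (he : s(a, b) ∈ E')
    (h1 : (fromEdges (F'.erase s(c, d))).Reachable c a)
    (h2 : (fromEdges (F'.erase s(c, d))).Reachable d b) :
    w s(c, d) ≤ w s(a, b) := by
  obtain ⟨hacyc, hsame, hnotmem⟩ := swap_lemma hF'.2.1 hf hcd h1 h2
  set F₃ := insert s(a, b) (F'.erase s(c, d)) with hF₃
  have hSF₃ : IsSpanningForest E' F₃ := by
    refine ⟨?_, hacyc, fun x y => (hF'.2.2 x y).trans (hsame x y)⟩
    exact Finset.insert_subset he ((Finset.erase_subset _ _).trans hF'.1)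
  have hle := hmin F₃ hSF₃
  rw [hF₃, Finset.sum_insert hnotmem] at hle
  have := Finset.add_sum_erase F' w hf
  linarith


/-- Incremental MSF lemma (Eppstein): for every MSF `F'` of a subgraph `G' = (V, E')`
of `G = (V, E)`, there is an MSF `F` of `G` with `(E' \ F') ∩ F = ∅`. -/
theorem msf_incremental {V : Type*} [Fintype V] [DecidableEq V]
    (E E' : Finset (Sym2 V)) (w : Sym2 V → ℝ) (hsub : E' ⊆ E)
    (F' : Finset (Sym2 V)) (hF' : IsMSF E' w F') :
    ∃ F : Finset (Sym2 V), IsMSF E w F ∧ (E' \ F') ∩ F = ∅ := by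
  classical
  set X := E' \ F' with hX
  suffices key : ∀ n (F : Finset (Sym2 V)), IsSpanningForest E F →
      (∀ F₂, IsSpanningForest E F₂ → F.sum w ≤ F₂.sum w) → (F ∩ X).card ≤ n →
      ∃ G, IsMSF E w G ∧ X ∩ G = ∅ by
    obtain ⟨F, hSF, hmin⟩ := exists_msf E w
    exact key (F ∩ X).card F hSF hmin le_rfl
  intro n
  induction n with
  | zero =>
    intro F hSF hmin hcard
    refine ⟨F, ⟨hSF, hmin⟩, ?_⟩
    rw [Finset.inter_comm]
    exact Finset.card_eq_zero.mp (Nat.le_zero.mp hcard)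
  | succ n ih =>
    intro F hSF hmin hcard
    rcases (F ∩ X).eq_empty_or_nonempty with hFX | ⟨e, he⟩
    · exact ⟨F, ⟨hSF, hmin⟩, by rwa [Finset.inter_comm]⟩
    obtain ⟨a, b, rfl⟩ : ∃ a b, e = s(a, b) := ⟨e.out.1, e.out.2, e.out_eq.symm⟩
    rw [Finset.mem_inter] at he
    obtain ⟨heF, heX⟩ := he
    have heE' : s(a, b) ∈ E' := (Finset.mem_sdiff.mp heX).1
    have heF' : s(a, b) ∉ F' := (Finset.mem_sdiff.mp heX).2
    have hcard' : ∀ F₂ : Finset (Sym2 V), F₂ ∩ X ⊆ (F ∩ X).erase s(a, b) →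
        (F₂ ∩ X).card ≤ n := by
      intro F₂ hsubX
      calc (F₂ ∩ X).card ≤ ((F ∩ X).erase s(a, b)).card := Finset.card_le_card hsubX
        _ = (F ∩ X).card - 1 := Finset.card_erase_of_mem (Finset.mem_inter.mpr ⟨heF, heX⟩)
        _ ≤ n := by omega
    by_cases hab : a = b
    · -- loop case: just remove it
      subst hab
      have hgraph : ∀ (S : Finset (Sym2 V)), s(a, a) ∉ S →
          fromEdges (insert s(a, a) S) = fromEdges S := by
        intro S _
        ext x y
        rw [fromEdges_adj, fromEdges_adj, Finset.mem_insert]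
        constructor
        · rintro ⟨h1 | h1, h2⟩
          · obtain ⟨rfl, rfl⟩ := Sym2.eq_iff.mp h1 |>.elim id (fun ⟨h, h'⟩ => ⟨h, h'⟩)
            exact absurd rfl h2
          · exact ⟨h1, h2⟩
        · exact fun ⟨h1, h2⟩ => ⟨Or.inr h1, h2⟩
      have hgraphF : fromEdges F = fromEdges (F.erase s(a, a)) := by
        conv_lhs => rw [fromEdges_insert_erase_self heF]
        exact hgraph _ (Finset.notMem_erase _ _)
      have hSF₂ : IsSpanningForest E (F.erase s(a, a)) := by
        refine ⟨(Finset.erase_subset _ _).trans hSF.1, ?_, fun x y => ?_⟩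
        · rw [← hgraphF]; exact hSF.2.1
        · rw [← hgraphF]; exact hSF.2.2 x y
      have hwpos : 0 ≤ w s(a, a) := by
        have hSF'' : IsSpanningForest E' (insert s(a, a) F') := by
          refine ⟨Finset.insert_subset heE' hF'.1.1, ?_, fun x y => ?_⟩
          · rw [hgraph _ heF']; exact hF'.1.2.1
          · rw [hgraph _ heF']; exact hF'.1.2.2 x y
        have := hF'.2 _ hSF''
        rw [Finset.sum_insert heF'] at this
        linarith
      have hmin₂ : ∀ F₂, IsSpanningForest E F₂ → (F.erase s(a, a)).sum w ≤ F₂.sum w := by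
        intro F₂ hF₂
        have h1 := Finset.add_sum_erase F w heF
        have h2 := hmin F₂ hF₂
        linarith
      refine ih (F.erase s(a, a)) hSF₂ hmin₂ (hcard' _ ?_)
      intro z hz
      rw [Finset.mem_inter, Finset.mem_erase] at hz
      rw [Finset.mem_erase, Finset.mem_inter]
      exact ⟨hz.1.1, hz.1.2, hz.2⟩
    · -- non-loop case: exchange
      have hreachF' : (fromEdges F').Reachable a b :=
        (hF'.1.2.2 a b).mp (Adj.reachable (fromEdges_adj.mpr ⟨heE', hab⟩))
      obtain ⟨p0⟩ := hreachF'
      set p : (fromEdges F').Walk a b := ↑p0.toPath with hp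
      have hpIsPath : p.IsPath := p0.toPath.2
      have hnab : ¬ (fromEdges (F.erase s(a, b))).Reachable a b :=
        not_reachable_erase_of_acyclic hSF.2.1 heF hab
      obtain ⟨c, d, hcd_mem, hac, had⟩ :=
        walk_crosses_cut (H := fromEdges (F.erase s(a, b))) p (Reachable.refl a) hnab
      have hcd : c ≠ d := fun h => had (h ▸ hac)
      -- s(c,d) is an edge of F'
      have hfF' : s(c, d) ∈ F' := by
        have := p.edges_subset_edgeSet hcd_mem
        rw [mem_edgeSet, fromEdges_adj] at this
        exact this.1
      have hfX : s(c, d) ∉ X := fun h => (Finset.mem_sdiff.mp h).2 hfF'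
      have hfe : s(c, d) ≠ s(a, b) := fun h => heF' (h ▸ hfF')
      -- d is reachable from a in F
      have hadF : (fromEdges F).Reachable a d := by
        have hdsup : d ∈ p.support := Walk.snd_mem_support_of_mem_edges p hcd_mem
        have : (fromEdges F').Reachable a d := ⟨p.takeUntil d hdsup⟩
        exact (hSF.2.2 a d).mp ((((hF'.1.2.2 a d).mpr this).mono (fromEdges_mono hsub)))
      -- hence b is reachable from d after deleting s(a,b)
      have hbd : (fromEdges (F.erase s(a, b))).Reachable b d := by
        rw [fromEdges_insert_erase_self heF, fromEdges_insert] at hadF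
        rcases reachable_sup_edge hadF with h | ⟨h1, h2⟩ | ⟨h1, h2⟩
        · exact absurd h had
        · exact h2
        · exact absurd h1 hnab
      -- the weight comparison  w s(c,d) ≤ w s(a,b)
      have hwle : w s(c, d) ≤ w s(a, b) := by
        have hnab' : ¬ (fromEdges (F'.erase s(c, d))).Reachable a b :=
          not_reachable_erase_of_path hF'.1.2.1 p hpIsPath hcd_mem
        have hreach2 : (fromEdges (F'.erase s(c, d)) ⊔
            SimpleGraph.fromEdgeSet {s(c, d)}).Reachable a b := by
          rw [← fromEdges_insert, Finset.insert_erase hfF']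
          exact ⟨p0⟩
        rcases reachable_sup_edge hreach2 with h | ⟨h1, h2⟩ | ⟨h1, h2⟩
        · exact absurd h hnab'
        · exact weight_le_of_swap hF'.1 hF'.2 hcd hfF' heE' h1.symm h2
        · rw [Sym2.eq_swap]
          refine weight_le_of_swap hF'.1 hF'.2 hcd.symm (by rwa [Sym2.eq_swap]) heE' ?_ ?_
          · rw [show F'.erase s(d, c) = F'.erase s(c, d) by rw [Sym2.eq_swap]]
            exact h1.symm
          · rw [show F'.erase s(d, c) = F'.erase s(c, d) by rw [Sym2.eq_swap]]
            exact h2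
      -- perform the swap in F
      obtain ⟨hacyc₂, hsame₂, hnotmem₂⟩ := swap_lemma hSF.2.1 heF hab hac hbd
      set F₂ := insert s(c, d) (F.erase s(a, b)) with hF₂
      have hSF₂ : IsSpanningForest E F₂ := by
        refine ⟨?_, hacyc₂, fun x y => (hSF.2.2 x y).trans (hsame₂ x y)⟩
        exact Finset.insert_subset (hsub (hF'.1.1 hfF'))
          ((Finset.erase_subset _ _).trans hSF.1)
      have hsum₂ : F₂.sum w ≤ F.sum w := by
        rw [hF₂, Finset.sum_insert hnotmem₂]
        have := Finset.add_sum_erase F w heF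
        linarith
      have hmin₂ : ∀ F₃, IsSpanningForest E F₃ → F₂.sum w ≤ F₃.sum w :=
        fun F₃ hF₃ => hsum₂.trans (hmin F₃ hF₃)
      refine ih F₂ hSF₂ hmin₂ (hcard' _ ?_)
      intro z hz
      rw [Finset.mem_inter, hF₂, Finset.mem_insert] at hz
      rw [Finset.mem_erase, Finset.mem_inter]
      rcases hz.1 with h | h
      · exact absurd (h ▸ hz.2) hfX
      · exact ⟨(Finset.mem_erase.mp h).1, (Finset.erase_subset _ _ h), hz.2⟩
end

section
/- Let T be a tree on n vertices and m ≥ 1 a fixed minimum cluster size with 2m ≤ n. Process the edges of T in any order, removing them one at a time; call a removal a 'true split' if both resulting components of the component being split have size ≥ m. Then the total number of true splits over the whole process is at most n/m − 1. -/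
open SimpleGraph Finset

variable {V : Type*} {W : Type*} [AddCommMonoid W] [LinearOrder W] [IsOrderedAddMonoid W]

section TrueSplitsAux
section Aux
variable {V : Type*} [Fintype V] [DecidableEq V]

instance fromEdges.adjDecidable (F : Finset (Sym2 V)) : DecidableRel (fromEdges F).Adj :=
  fun a b => decidable_of_iff (s(a, b) ∈ F ∧ a ≠ b) (by simp [fromEdges])

/-- key numeric lemma -/
lemma key_numeric {ι : Type*} [DecidableEq ι] (m : ℕ) (hm : 1 ≤ m) (s : Finset ι) (a : ι → ℕ) :
    ∑ i ∈ s, (a i / m - 1) + (s.filter fun i => m ≤ a i).card ≤ (∑ i ∈ s, a i) / m := by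
  set t := s.filter fun i => m ≤ a i with ht
  have h1 : ∑ i ∈ s, (a i / m - 1) = ∑ i ∈ t, (a i / m - 1) := by
    rw [ht, Finset.sum_filter]
    refine Finset.sum_congr rfl fun i _ => ?_
    by_cases h : m ≤ a i
    · simp [h]
    · simp [h, Nat.div_eq_of_lt (lt_of_not_ge h)]
  have h2 : ∑ i ∈ t, (a i / m - 1) + t.card = ∑ i ∈ t, (a i / m) := by
    rw [Finset.card_eq_sum_ones t, ← Finset.sum_add_distrib]
    refine Finset.sum_congr rfl fun i hi => ?_
    have : 1 ≤ a i / m := (Nat.one_le_div_iff hm).mpr (Finset.mem_filter.mp hi).2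
    omega
  have h3 : ∑ i ∈ t, a i / m ≤ (∑ i ∈ t, a i) / m := by
    rw [Nat.le_div_iff_mul_le hm, Finset.sum_mul]
    exact Finset.sum_le_sum fun i _ => Nat.div_mul_le_self _ _
  have h4 : (∑ i ∈ t, a i) / m ≤ (∑ i ∈ s, a i) / m :=
    Nat.div_le_div_right (Finset.sum_le_sum_of_subset (Finset.filter_subset _ _))
  omega

lemma key_weak {ι : Type*} [DecidableEq ι] (m : ℕ) (hm : 1 ≤ m) (s : Finset ι) (a : ι → ℕ) :
    ∑ i ∈ s, (a i / m - 1) ≤ (∑ i ∈ s, a i) / m - 1 := by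
  have hk := key_numeric m hm s a
  by_cases hc : ∀ i ∈ s, a i < m
  · have : ∑ i ∈ s, (a i / m - 1) = 0 :=
      Finset.sum_eq_zero fun i hi => by simp [Nat.div_eq_of_lt (hc i hi)]
    simp [this]
  · push_neg at hc
    obtain ⟨i, his, hmi⟩ := hc
    have : 0 < (s.filter fun i => m ≤ a i).card :=
      Finset.card_pos.mpr ⟨i, Finset.mem_filter.mpr ⟨his, hmi⟩⟩
    omega

lemma key_strong {ι : Type*} [DecidableEq ι] (m : ℕ) (hm : 1 ≤ m) (s : Finset ι) (a : ι → ℕ)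
    {i j : ι} (hi : i ∈ s) (hj : j ∈ s) (hij : i ≠ j) (hai : m ≤ a i) (haj : m ≤ a j) :
    ∑ i ∈ s, (a i / m - 1) + 1 ≤ (∑ i ∈ s, a i) / m - 1 := by
  have hk := key_numeric m hm s a
  have hcard : 2 ≤ (s.filter fun i => m ≤ a i).card := by
    apply Finset.one_lt_card.mpr
    exact ⟨i, Finset.mem_filter.mpr ⟨hi, hai⟩, j, Finset.mem_filter.mpr ⟨hj, haj⟩, hij⟩
  omega


noncomputable def phi (m : ℕ) (F : Finset (Sym2 V)) : ℕ :=
  ∑ c : (fromEdges F).ConnectedComponent, (Nat.card c.supp / m - 1)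

lemma fromEdges_le {F F' : Finset (Sym2 V)} (h : F ⊆ F') : fromEdges F ≤ fromEdges F' :=
  SimpleGraph.fromEdgeSet_mono (by exact_mod_cast h)

open scoped Classical in
lemma card_supp_eq (F : Finset (Sym2 V)) (c : (fromEdges F).ConnectedComponent) :
    Nat.card c.supp =
      (Finset.univ.filter fun v => (fromEdges F).connectedComponentMk v = c).card := by
  have h : c.supp = ↑(Finset.univ.filter fun v => (fromEdges F).connectedComponentMk v = c) := by
    ext v; simp [SimpleGraph.ConnectedComponent.mem_supp_iff]
  rw [h, Nat.card_coe_set_eq, Set.ncard_coe_finset]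

open scoped Classical in
lemma card_supp_fiber {F' F : Finset (Sym2 V)} (h : fromEdges F' ≤ fromEdges F)
    (d : (fromEdges F).ConnectedComponent) :
    Nat.card d.supp = ∑ c ∈ Finset.univ.filter
        (fun c : (fromEdges F').ConnectedComponent =>
          c.map (SimpleGraph.Hom.ofLE h) = d), Nat.card c.supp := by
  rw [card_supp_eq]
  rw [Finset.card_eq_sum_card_fiberwise
    (f := fun v => (fromEdges F').connectedComponentMk v)
    (t := Finset.univ.filter (fun c : (fromEdges F').ConnectedComponent =>
      c.map (SimpleGraph.Hom.ofLE h) = d))]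
  · refine Finset.sum_congr rfl fun c hc => ?_
    rw [card_supp_eq]
    congr 1
    ext v
    simp only [Finset.mem_filter, Finset.mem_univ, true_and]
    constructor
    · rintro ⟨_, hv⟩; exact hv
    · intro hv
      refine ⟨?_, hv⟩
      have := (Finset.mem_filter.mp hc).2
      rw [← this, ← hv]
      simp [SimpleGraph.ConnectedComponent.map_mk]
  · intro v hv
    simp only [Finset.coe_filter, Set.mem_setOf_eq, Finset.mem_filter, Finset.mem_univ, true_and] at hv ⊢
    rw [SimpleGraph.ConnectedComponent.map_mk]
    exact hv

end Aux

section Aux2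
variable {V : Type*} [Fintype V] [DecidableEq V]

open scoped Classical in
lemma phi_le (m : ℕ) (hm : 1 ≤ m) {F' F : Finset (Sym2 V)} (hFF : F' ⊆ F) :
    phi m F' ≤ phi m F := by
  have h : fromEdges F' ≤ fromEdges F := fromEdges_le hFF
  rw [phi, phi, ← Finset.sum_fiberwise_of_maps_to
    (g := fun c : (fromEdges F').ConnectedComponent =>
      c.map (SimpleGraph.Hom.ofLE h))
    (fun c _ => Finset.mem_univ _)]
  refine Finset.sum_le_sum fun d _ => ?_
  rw [card_supp_fiber h d]
  exact key_weak m hm _ _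

open scoped Classical in
lemma phi_split (m : ℕ) (hm : 1 ≤ m) {F' F : Finset (Sym2 V)} (hFF : F' ⊆ F) {u v : V}
    (hR : (fromEdges F).Reachable u v) (hnR : ¬ (fromEdges F').Reachable u v)
    (hu : m ≤ Nat.card ((fromEdges F').connectedComponentMk u).supp)
    (hv : m ≤ Nat.card ((fromEdges F').connectedComponentMk v).supp) :
    phi m F' + 1 ≤ phi m F := by
  have h : fromEdges F' ≤ fromEdges F := fromEdges_le hFF
  set π := fun c : (fromEdges F').ConnectedComponent =>
    c.map (SimpleGraph.Hom.ofLE h) with hπ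
  set d₀ : (fromEdges F).ConnectedComponent := (fromEdges F).connectedComponentMk u with hd₀
  have hmapu : π ((fromEdges F').connectedComponentMk u) = d₀ := by
    simp [hπ, hd₀, SimpleGraph.ConnectedComponent.map_mk]
  have hmapv : π ((fromEdges F').connectedComponentMk v) = d₀ := by
    simp only [hπ, hd₀, SimpleGraph.ConnectedComponent.map_mk]
    exact SimpleGraph.ConnectedComponent.sound hR.symm
  have hne : (fromEdges F').connectedComponentMk u ≠ (fromEdges F').connectedComponentMk v :=
    fun hc => hnR (SimpleGraph.ConnectedComponent.exact hc)
  have hsum : phi m F' = ∑ d : (fromEdges F).ConnectedComponent,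
      ∑ c ∈ Finset.univ.filter (fun c => π c = d), (Nat.card c.supp / m - 1) := by
    rw [phi, ← Finset.sum_fiberwise_of_maps_to (g := π) (fun c _ => Finset.mem_univ _)]
  have hinner : (∑ c ∈ Finset.univ.filter (fun c => π c = d₀),
      (Nat.card c.supp / m - 1)) + 1 ≤ Nat.card d₀.supp / m - 1 := by
    rw [card_supp_fiber h d₀]
    exact key_strong m hm _ _ (Finset.mem_filter.mpr ⟨Finset.mem_univ _, hmapu⟩)
      (Finset.mem_filter.mpr ⟨Finset.mem_univ _, hmapv⟩) hne hu hv
  have houter : ∀ d ∈ Finset.univ.erase d₀,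
      (∑ c ∈ Finset.univ.filter (fun c => π c = d), (Nat.card c.supp / m - 1))
        ≤ Nat.card d.supp / m - 1 := by
    intro d _
    rw [card_supp_fiber h d]
    exact key_weak m hm _ _
  have e1 := Finset.add_sum_erase Finset.univ
    (fun d : (fromEdges F).ConnectedComponent =>
      ∑ c ∈ Finset.univ.filter (fun c => π c = d), (Nat.card c.supp / m - 1))
    (Finset.mem_univ d₀)
  have e2 := Finset.add_sum_erase Finset.univ
    (fun d : (fromEdges F).ConnectedComponent => Nat.card d.supp / m - 1)
    (Finset.mem_univ d₀)
  have hrest := Finset.sum_le_sum houter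
  beta_reduce at e1 e2
  have hPF : phi m F = ∑ x : (fromEdges F).ConnectedComponent, (Nat.card x.supp / m - 1) := rfl
  rw [hsum, hPF]
  omega

lemma not_reachable_erase {T F : Finset (Sym2 V)} (hacyc : (fromEdges T).IsAcyclic)
    (hFT : F ⊆ T) {u v : V} (huv : u ≠ v) (he : s(u, v) ∈ F) :
    ¬ (fromEdges (F.erase s(u, v))).Reachable u v := by
  have hle : fromEdges F ≤ fromEdges T := fromEdges_le hFT
  have hac : (fromEdges F).IsAcyclic := fun w c hc => hacyc (c.mapLe hle) (hc.mapLe hle)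
  have hadj : (fromEdges F).Adj u v := by
    rw [fromEdges, SimpleGraph.fromEdgeSet_adj]
    exact ⟨by exact_mod_cast he, huv⟩
  have hb := SimpleGraph.isAcyclic_iff_forall_adj_isBridge.mp hac hadj
  rw [SimpleGraph.isBridge_iff] at hb
  intro hr
  apply hb; rw [SimpleGraph.deleteEdges]
  refine SimpleGraph.Reachable.mono ?_ hr
  intro a b hab
  rw [fromEdges, SimpleGraph.fromEdgeSet_adj] at hab
  obtain ⟨hmem, hne⟩ := hab
  rw [Finset.coe_erase, Set.mem_diff] at hmem
  rw [SimpleGraph.sdiff_adj]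
  constructor
  · rw [fromEdges, SimpleGraph.fromEdgeSet_adj]
    exact ⟨hmem.1, hne⟩
  · rw [SimpleGraph.fromEdgeSet_adj]
    rintro ⟨hmem2, -⟩
    exact hmem.2 (by simpa using hmem2)

lemma phi_connected (m : ℕ) {T : Finset (Sym2 V)} (hconn : (fromEdges T).Connected) :
    phi m T = Fintype.card V / m - 1 := by
  obtain ⟨v₀⟩ := hconn.nonempty
  haveI : Subsingleton (fromEdges T).ConnectedComponent :=
    ⟨SimpleGraph.ConnectedComponent.ind₂ fun a b =>
      SimpleGraph.ConnectedComponent.sound (hconn.preconnected a b)⟩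
  rw [phi, Fintype.sum_subsingleton _ ((fromEdges T).connectedComponentMk v₀)]
  congr 2
  have : ((fromEdges T).connectedComponentMk v₀).supp = Set.univ := by
    ext x
    simp only [SimpleGraph.ConnectedComponent.mem_supp_iff, Set.mem_univ, iff_true]
    exact Subsingleton.elim _ _
  rw [this, Nat.card_coe_set_eq, Set.ncard_univ, Nat.card_eq_fintype_card]

end Aux2

section Aux3
variable {V : Type*} [Fintype V] [DecidableEq V]

lemma ncard_reachable (F : Finset (Sym2 V)) (u : V) :
    Set.ncard {x : V | (fromEdges F).Reachable u x} =
      Nat.card ((fromEdges F).connectedComponentMk u).supp := by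
  have h : {x : V | (fromEdges F).Reachable u x}
      = ((fromEdges F).connectedComponentMk u).supp := by
    ext x
    simp only [SimpleGraph.ConnectedComponent.mem_supp_iff,
      SimpleGraph.ConnectedComponent.eq, Set.mem_setOf_eq]
    exact ⟨SimpleGraph.Reachable.symm, SimpleGraph.Reachable.symm⟩
  rw [h, Nat.card_coe_set_eq]

end Aux3

end TrueSplitsAux

/-- Removing the edges of a tree `T` on `n` vertices one at a time (in an arbitrary
order `order`), a removal is a *true split* when both components resulting from the
split have size at least `m`. The total number of true splits is at most `n/m − 1`,
i.e. `(count + 1) * m ≤ n`. -/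
theorem true_splits_bound {V : Type*} [Fintype V] [DecidableEq V]
    (n m : ℕ) (hm : 1 ≤ m) (hnm : 2 * m ≤ n) (hcard : Fintype.card V = n)
    (T : Finset (Sym2 V)) (hdiag : ∀ e ∈ T, ¬ e.IsDiag)
    (hconn : (fromEdges T).Connected) (hacyc : (fromEdges T).IsAcyclic)
    (order : Fin T.card → Sym2 V) (hinj : Function.Injective order)
    (hrange : ∀ j, order j ∈ T) :
    (Nat.card {j : Fin T.card //
        ∃ u v : V, order j = s(u, v) ∧
          m ≤ Set.ncard {x : V | (fromEdges (T \ (Finset.univ.filter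
                (fun i : Fin T.card => (i : ℕ) ≤ (j : ℕ))).image order)).Reachable u x} ∧
          m ≤ Set.ncard {x : V | (fromEdges (T \ (Finset.univ.filter
                (fun i : Fin T.card => (i : ℕ) ≤ (j : ℕ))).image order)).Reachable v x}}
      + 1) * m ≤ n := by
  classical
  set P : Fin T.card → Prop := fun j =>
    ∃ u v : V, order j = s(u, v) ∧
      m ≤ Set.ncard {x : V | (fromEdges (T \ (Finset.univ.filter
            (fun i : Fin T.card => (i : ℕ) ≤ (j : ℕ))).image order)).Reachable u x} ∧
      m ≤ Set.ncard {x : V | (fromEdges (T \ (Finset.univ.filter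
            (fun i : Fin T.card => (i : ℕ) ≤ (j : ℕ))).image order)).Reachable v x} with hP
  set R : ℕ → Finset (Sym2 V) :=
    fun t => T \ (Finset.univ.filter (fun i : Fin T.card => (i : ℕ) < t)).image order with hR
  have hR0 : R 0 = T := by simp [hR]
  have hmem : ∀ t : Fin T.card, order t ∈ R (t : ℕ) := by
    intro t
    simp only [hR, Finset.mem_sdiff]
    refine ⟨hrange t, fun hmemim => ?_⟩
    obtain ⟨i, hi, heq⟩ := Finset.mem_image.mp hmemim
    have hit : i = t := hinj heq
    subst hit
    exact absurd (Finset.mem_filter.mp hi).2 (lt_irrefl _)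
  have hstep : ∀ t : Fin T.card, R ((t : ℕ) + 1) = (R (t : ℕ)).erase (order t) := by
    intro t
    have hfil : (Finset.univ.filter fun i : Fin T.card => (i : ℕ) < (t : ℕ) + 1)
        = insert t (Finset.univ.filter fun i : Fin T.card => (i : ℕ) < (t : ℕ)) := by
      ext i
      simp only [Finset.mem_insert, Finset.mem_filter, Finset.mem_univ, true_and, Fin.ext_iff]
      omega
    simp only [hR]
    rw [hfil, Finset.image_insert, Finset.sdiff_insert]
  have key : ∀ t : ℕ, t ≤ T.card →
      phi m (R t) + (Finset.univ.filter fun j : Fin T.card => P j ∧ (j : ℕ) < t).card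
        ≤ phi m T := by
    intro t
    induction t with
    | zero => intro _; simp [hR0]
    | succ t ih =>
      intro ht
      have ht' : t < T.card := ht
      have ihle := ih (le_of_lt ht')
      set jt : Fin T.card := ⟨t, ht'⟩ with hjt
      have hjtv : (jt : ℕ) = t := rfl
      have h1 : R (t + 1) = (R t).erase (order jt) := by
        have := hstep jt; rwa [hjtv] at this
      have h2 : order jt ∈ R t := by have := hmem jt; rwa [hjtv] at this
      have hRT : R t ⊆ T := by rw [hR]; exact Finset.sdiff_subset
      by_cases hp : P jt
      · have hcount : (Finset.univ.filter fun j : Fin T.card => P j ∧ (j : ℕ) < t + 1).card ≤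
            (Finset.univ.filter fun j : Fin T.card => P j ∧ (j : ℕ) < t).card + 1 := by
          have hsub : (Finset.univ.filter fun j : Fin T.card => P j ∧ (j : ℕ) < t + 1) ⊆
              insert jt (Finset.univ.filter fun j : Fin T.card => P j ∧ (j : ℕ) < t) := by
            intro j hj
            simp only [Finset.mem_filter, Finset.mem_univ, true_and] at hj
            rcases Nat.lt_succ_iff_lt_or_eq.mp hj.2 with h | h
            · exact Finset.mem_insert_of_mem
                (Finset.mem_filter.mpr ⟨Finset.mem_univ _, hj.1, h⟩)
            · have hje : j = jt := Fin.ext h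
              rw [hje]; exact Finset.mem_insert_self _ _
          exact le_trans (Finset.card_le_card hsub) (Finset.card_insert_le _ _)
        obtain ⟨u, v, heq, hu, hv⟩ := hp
        have hedge : (T \ (Finset.univ.filter
            (fun i : Fin T.card => (i : ℕ) ≤ (jt : ℕ))).image order) = R (t + 1) := by
          simp only [hR]
          congr 2
          ext i
          simp only [Finset.mem_filter, Finset.mem_univ, true_and, hjtv]
          omega
        have huv : u ≠ v := by
          intro h
          apply hdiag (order jt) (hrange jt)
          rw [heq, h]
          exact Sym2.mk_isDiag_iff.mpr rfl
        have horder_mem : s(u, v) ∈ R t := heq ▸ h2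
        have hFF : R (t + 1) ⊆ R t := by rw [h1]; exact Finset.erase_subset _ _
        have hadj : (fromEdges (R t)).Adj u v := by
          rw [fromEdges, SimpleGraph.fromEdgeSet_adj]
          exact ⟨by exact_mod_cast horder_mem, huv⟩
        have hr : (fromEdges (R t)).Reachable u v := hadj.reachable
        have hnr : ¬ (fromEdges (R (t + 1))).Reachable u v := by
          rw [h1, heq]
          exact not_reachable_erase hacyc hRT huv horder_mem
        rw [hedge, ncard_reachable] at hu hv
        have hsplit := phi_split m hm hFF hr hnr hu hv
        omega
      · have hcount : (Finset.univ.filter fun j : Fin T.card => P j ∧ (j : ℕ) < t + 1).card ≤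
            (Finset.univ.filter fun j : Fin T.card => P j ∧ (j : ℕ) < t).card := by
          apply Finset.card_le_card
          intro j hj
          simp only [Finset.mem_filter, Finset.mem_univ, true_and] at hj ⊢
          refine ⟨hj.1, ?_⟩
          rcases Nat.lt_succ_iff_lt_or_eq.mp hj.2 with h | h
          · exact h
          · have hje : j = jt := Fin.ext h
            exact absurd (hje ▸ hj.1) hp
        have hmono : phi m (R (t + 1)) ≤ phi m (R t) := by
          rw [h1]; exact phi_le m hm (Finset.erase_subset _ _)
        omega
  have hfinal := key T.card le_rfl
  have hfil : (Finset.univ.filter fun j : Fin T.card => P j ∧ (j : ℕ) < T.card)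
      = Finset.univ.filter P := by
    apply Finset.filter_congr
    intro j _
    simp [j.isLt]
  have hphiT : phi m T = n / m - 1 := by rw [phi_connected m hconn, hcard]
  rw [hfil, hphiT] at hfinal
  have hNat : Nat.card {j : Fin T.card // P j} = (Finset.univ.filter P).card := by
    rw [Nat.card_eq_fintype_card, Fintype.card_subtype]
  rw [hNat]
  have h2m : 2 ≤ n / m := (Nat.le_div_iff_mul_le hm).mpr hnm
  have hk1 : (Finset.univ.filter P).card + 1 ≤ n / m := by omega
  calc ((Finset.univ.filter P).card + 1) * m ≤ (n / m) * m := Nat.mul_le_mul_right m hk1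
    _ ≤ n := Nat.div_mul_le_self n m
end
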